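/- Let (X, d) be a metric space and S a finite set of 2m points in X. Let M = {e_1, ..., e_m} be a maximum-weight perfect matching of S, where the weight of a pair {u, v} is d(u, v). Then d(S) ≤ (2m − 1) · Σ_{i=1}^m d(e_i), where d(S) is the sum over all unordered pairs in S of their distance. -/
import Mathlib


/-- If `{x i, y i}` is a maximum-weight perfect matching of a set `S` of `2m` points,
then `d(S) ≤ (2m − 1) · Σ_i d(x i, y i)`, where `d(S)` counts each unordered pair once. -/
theorem stmt_2 {X : Type*} [MetricSpace X] [DecidableEq X] (m : ℕ) (hm : 1 ≤ m)
    (S : Finset X) (hcard : S.card = 2 * m)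
    (x y : Fin m → X)
    (hmatching : Function.Injective (Sum.elim x y : Fin m ⊕ Fin m → X) ∧
      Finset.image x Finset.univ ∪ Finset.image y Finset.univ = S)
    (hmax : ∀ x' y' : Fin m → X,
      Function.Injective (Sum.elim x' y' : Fin m ⊕ Fin m → X) →
      Finset.image x' Finset.univ ∪ Finset.image y' Finset.univ = S →
      ∑ i, dist (x' i) (y' i) ≤ ∑ i, dist (x i) (y i)) :
    (∑ u ∈ S, ∑ v ∈ S, dist u v) / 2 ≤ (2 * (m : ℝ) - 1) * ∑ i, dist (x i) (y i) := by
  obtain ⟨hinj, himg⟩ := hmatching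
  set F : Fin m ⊕ Fin m → X := Sum.elim x y with hF
  set W : ℝ := ∑ i, dist (x i) (y i) with hW
  -- image of elim
  have himage : ∀ a b : Fin m → X,
      Finset.image (Sum.elim a b) Finset.univ
        = Finset.image a Finset.univ ∪ Finset.image b Finset.univ := by
    intro a b
    ext z
    simp [Sum.exists]
  have hS : S = Finset.image F Finset.univ := by rw [hF, himage, himg]
  -- any re-pairing via a permutation of the index sum type gives a matching
  have key : ∀ e : (Fin m ⊕ Fin m) ≃ (Fin m ⊕ Fin m),
      ∑ i, dist (F (e (Sum.inl i))) (F (e (Sum.inr i))) ≤ W := by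
    intro e
    have helim : (Sum.elim (fun i => F (e (Sum.inl i))) (fun i => F (e (Sum.inr i)))
        : Fin m ⊕ Fin m → X) = F ∘ e := by
      funext a; cases a <;> rfl
    apply hmax
    · rw [helim]; exact hinj.comp e.injective
    · rw [← himage, helim, ← Finset.image_image, hS]
      congr 1
      exact Finset.image_univ_equiv e
  -- two-term extraction lemma
  have extract : ∀ (e : (Fin m ⊕ Fin m) ≃ (Fin m ⊕ Fin m)) (i j : Fin m), i ≠ j →
      (∀ k, k ≠ i → k ≠ j → e (Sum.inl k) = Sum.inl k ∧ e (Sum.inr k) = Sum.inr k) →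
      dist (F (e (Sum.inl i))) (F (e (Sum.inr i)))
        + dist (F (e (Sum.inl j))) (F (e (Sum.inr j)))
        ≤ dist (x i) (y i) + dist (x j) (y j) := by
    intro e i j hij hfix
    have hk := key e
    have hsum : ∑ k, (dist (x k) (y k) - dist (F (e (Sum.inl k))) (F (e (Sum.inr k))))
        = (dist (x i) (y i) - dist (F (e (Sum.inl i))) (F (e (Sum.inr i))))
          + (dist (x j) (y j) - dist (F (e (Sum.inl j))) (F (e (Sum.inr j)))) := by
      have hsub : ∑ k, (dist (x k) (y k) - dist (F (e (Sum.inl k))) (F (e (Sum.inr k))))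
          = ∑ k ∈ ({i, j} : Finset (Fin m)),
              (dist (x k) (y k) - dist (F (e (Sum.inl k))) (F (e (Sum.inr k)))) := by
        symm
        apply Finset.sum_subset (Finset.subset_univ _)
        intro k _ hk'
        simp only [Finset.mem_insert, Finset.mem_singleton, not_or] at hk'
        obtain ⟨h1, h2⟩ := hfix k hk'.1 hk'.2
        rw [h1, h2]
        simp [hF]
      rw [hsub, Finset.sum_pair hij]
    rw [Finset.sum_sub_distrib, ← hW] at hsum
    linarith
  -- fact A : d(x i, x j) + d(y i, y j) ≤ d i + d j for i ≠ j
  have factA : ∀ i j : Fin m, i ≠ j →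
      dist (x i) (x j) + dist (y i) (y j) ≤ dist (x i) (y i) + dist (x j) (y j) := by
    intro i j hij
    have := extract (Equiv.swap (Sum.inl j) (Sum.inr i)) i j hij ?_
    · have e1 : (Equiv.swap (Sum.inl j) (Sum.inr i)) (Sum.inl i) = Sum.inl i :=
        Equiv.swap_apply_of_ne_of_ne (by simp [hij]) (by simp)
      have e2 : (Equiv.swap (Sum.inl j) (Sum.inr i)) (Sum.inr i) = Sum.inl j :=
        Equiv.swap_apply_right (Sum.inl j) (Sum.inr i)
      have e3 : (Equiv.swap (Sum.inl j) (Sum.inr i)) (Sum.inl j) = Sum.inr i :=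
        Equiv.swap_apply_left (Sum.inl j) (Sum.inr i)
      have e4 : (Equiv.swap (Sum.inl j) (Sum.inr i)) (Sum.inr j) = Sum.inr j :=
        Equiv.swap_apply_of_ne_of_ne (by simp) (by simp [hij.symm])
      rw [e1, e2, e3, e4] at this
      simpa [hF] using this
    · intro k hki hkj
      refine ⟨Equiv.swap_apply_of_ne_of_ne (by simpa using hkj) (by simp),
        Equiv.swap_apply_of_ne_of_ne (by simp) (by simpa using hki)⟩
  -- fact B : d(x i, y j) + d(x j, y i) ≤ d i + d j for all i j
  have factB : ∀ i j : Fin m,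
      dist (x i) (y j) + dist (x j) (y i) ≤ dist (x i) (y i) + dist (x j) (y j) := by
    intro i j
    rcases eq_or_ne i j with rfl | hij
    · exact le_refl _
    have := extract (Equiv.swap (Sum.inr i : Fin m ⊕ Fin m) (Sum.inr j)) i j hij ?_
    · have e1 : (Equiv.swap (Sum.inr i : Fin m ⊕ Fin m) (Sum.inr j)) (Sum.inl i) = Sum.inl i :=
        Equiv.swap_apply_of_ne_of_ne (by simp) (by simp)
      have e2 : (Equiv.swap (Sum.inr i : Fin m ⊕ Fin m) (Sum.inr j)) (Sum.inr i) = Sum.inr j :=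
        Equiv.swap_apply_left (Sum.inr i) (Sum.inr j)
      have e3 : (Equiv.swap (Sum.inr i : Fin m ⊕ Fin m) (Sum.inr j)) (Sum.inl j) = Sum.inl j :=
        Equiv.swap_apply_of_ne_of_ne (by simp) (by simp)
      have e4 : (Equiv.swap (Sum.inr i : Fin m ⊕ Fin m) (Sum.inr j)) (Sum.inr j) = Sum.inr i :=
        Equiv.swap_apply_right (Sum.inr i) (Sum.inr j)
      rw [e1, e2, e3, e4] at this
      simpa [hF, dist_comm (y i) (x j)] using this
    · intro k hki hkj
      exact ⟨Equiv.swap_apply_of_ne_of_ne (by simp) (by simp),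
        Equiv.swap_apply_of_ne_of_ne (by simpa using hki) (by simpa using hkj)⟩
  -- rewrite the double sum over S as a double sum over the index type
  have hinjOn : Set.InjOn F (Finset.univ : Finset (Fin m ⊕ Fin m)) := hinj.injOn
  have hdouble : ∑ u ∈ S, ∑ v ∈ S, dist u v
      = ∑ a : Fin m ⊕ Fin m, ∑ b : Fin m ⊕ Fin m, dist (F a) (F b) := by
    rw [hS, Finset.sum_image (fun a ha b hb => hinj.eq_iff.mp)]
    exact Finset.sum_congr rfl fun a _ =>
      Finset.sum_image (fun c hc b hb h => hinj h)
  rw [hdouble]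
  -- split the sums by the sum type
  rw [Fintype.sum_sum_type]
  simp only [Fintype.sum_sum_type, hF, Sum.elim_inl, Sum.elim_inr]
  rw [Finset.sum_add_distrib, Finset.sum_add_distrib]
  -- pointwise bound
  have hpt : ∀ i j : Fin m,
      dist (x i) (x j) + dist (x i) (y j) + (dist (y i) (x j) + dist (y i) (y j))
        ≤ 2 * (dist (x i) (y i) + dist (x j) (y j))
          - (if i = j then 2 * dist (x i) (y i) else 0) := by
    intro i j
    rcases eq_or_ne i j with rfl | hij
    · simp [dist_comm (y i) (x i)]; ring_nf; simp
    · have hA := factA i j hij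
      have hB := factB i j
      simp only [hij, if_false]
      rw [dist_comm (x j) (y i)] at hB
      linarith
  have hbound : (∑ i, ∑ j, dist (x i) (x j)) + (∑ i, ∑ j, dist (x i) (y j))
      + ((∑ i, ∑ j, dist (y i) (x j)) + (∑ i, ∑ j, dist (y i) (y j)))
      ≤ ∑ i, ∑ j, (2 * (dist (x i) (y i) + dist (x j) (y j))
          - (if i = j then 2 * dist (x i) (y i) else 0)) := by
    rw [← Finset.sum_add_distrib, ← Finset.sum_add_distrib]
    simp only [← Finset.sum_add_distrib]
    exact Finset.sum_le_sum fun i _ => Finset.sum_le_sum fun j _ => hpt i j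
  have hrhs : ∑ i, ∑ j, (2 * (dist (x i) (y i) + dist (x j) (y j))
      - (if i = j then 2 * dist (x i) (y i) else 0)) = (4 * m - 2) * W := by
    simp only [Finset.sum_sub_distrib, Finset.mul_sum, Finset.sum_ite_eq,
      Finset.mem_univ, if_true, mul_add, Finset.sum_add_distrib, Finset.sum_const,
      Finset.card_univ, Fintype.card_fin, nsmul_eq_mul, ← Finset.mul_sum, ← hW]
    push_cast
    ring
  rw [hrhs] at hbound
  linarith
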